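/- arXiv:2501.05865 — 3 statements merged into one kernel-verified Lean document; each statement's English description precedes it below -/
import Mathlib

section
/- Let π be a set of primes, G a finite group, and S a normal subgroup of G such that every prime divisor of the index |G : S| belongs to π (i.e., G/S is a π-group). Suppose M is a Hall π-subgroup of S. Then the following two statements are equivalent: (1) there exists a Hall π-subgroup H of G such that M = H ∩ S; (2) the S-conjugacy class of M is G-invariant, that is, for every g ∈ G there exists s ∈ S with gMg⁻¹ = sMs⁻¹. -/
open scoped Pointwise

section Helpers

private lemma pi_coprime {π : Set ℕ} {m n : ℕ}
    (hm : ∀ p : ℕ, p.Prime → p ∣ m → p ∈ π) (hn : ∀ p ∈ π, ¬ p ∣ n) :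
    Nat.Coprime m n := by
  by_contra h
  obtain ⟨p, pp, hpm, hpn⟩ := Nat.Prime.not_coprime_iff_dvd.mp h
  exact hn p (hm p pp hpm) hpn

variable {G : Type*} [Group G]

private lemma conj_map_mul (M : Subgroup G) (a b : G) :
    M.map (MulAut.conj (a * b)).toMonoidHom
      = (M.map (MulAut.conj b).toMonoidHom).map (MulAut.conj a).toMonoidHom := by
  rw [Subgroup.map_map]
  congr 1
  ext x
  simp [mul_assoc]

private lemma conj_map_one (M : Subgroup G) :
    M.map (MulAut.conj (1 : G)).toMonoidHom = M := by
  ext x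
  simp [Subgroup.mem_map]

private lemma conj_map_self {M : Subgroup G} {h : G} (hh : h ∈ M) :
    M.map (MulAut.conj h).toMonoidHom = M := by
  ext x
  rw [Subgroup.mem_map_equiv]
  constructor
  · intro hx
    have := M.mul_mem (M.mul_mem hh hx) (M.inv_mem hh)
    simpa [mul_assoc] using this
  · intro hx
    simpa using M.mul_mem (M.mul_mem (M.inv_mem hh) hx) hh

private lemma conj_map_normal {S : Subgroup G} (hS : S.Normal) (g : G) :
    S.map (MulAut.conj g).toMonoidHom = S := by
  ext x
  rw [Subgroup.mem_map_equiv]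
  constructor
  · intro hx
    have := hS.conj_mem _ hx g
    simpa [mul_assoc] using this
  · intro hx
    simpa [mul_assoc] using hS.conj_mem _ hx g⁻¹

private lemma mem_normalizer_of_conj_map {M : Subgroup G} {x : G}
    (h : M.map (MulAut.conj x).toMonoidHom = M) : x ∈ Subgroup.normalizer (M : Set G) := by
  rw [Subgroup.mem_normalizer_iff]
  intro y
  constructor
  · intro hy
    have : (MulAut.conj x).toMonoidHom y ∈ M.map (MulAut.conj x).toMonoidHom :=
      ⟨y, hy, rfl⟩
    rw [h] at this
    simpa using this
  · intro hy
    rw [← h] at hy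
    rw [Subgroup.mem_map_equiv] at hy
    simpa [mul_assoc] using hy

end Helpers

/-- `H` is a Hall `π`-subgroup of the ambient group: every prime divisor of `|H|`
belongs to `π`, and no prime in `π` divides the index `|G : H|`. -/
def IsHallSubgroup {G : Type*} [Group G] (π : Set ℕ) (H : Subgroup G) : Prop :=
  (∀ p : ℕ, p.Prime → p ∣ Nat.card H → p ∈ π) ∧ ∀ p ∈ π, ¬ p ∣ H.index

theorem hall_extension_iff_conjClass_invariant {G : Type*} [Group G] [Finite G]
    (π : Set ℕ) (hπ : ∀ p ∈ π, Nat.Prime p)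
    (S : Subgroup G) (hS : S.Normal)
    (hquot : ∀ p : ℕ, p.Prime → p ∣ S.index → p ∈ π)
    (M : Subgroup G) (hMS : M ≤ S) (hM : IsHallSubgroup π (M.subgroupOf S)) :
    (∃ H : Subgroup G, IsHallSubgroup π H ∧ M = H ⊓ S) ↔
    (∀ g : G, ∃ s ∈ S,
      M.map (MulAut.conj g).toMonoidHom = M.map (MulAut.conj s).toMonoidHom) := by
  constructor
  · rintro ⟨H, ⟨hH1, hH2⟩, hMeq⟩ g
    have hco : Nat.Coprime S.index H.index := pi_coprime hquot hH2
    have hsup : S ⊔ H = ⊤ := by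
      rw [← Subgroup.index_eq_one]
      have hd : (S ⊔ H).index ∣ Nat.gcd S.index H.index :=
        Nat.dvd_gcd (Subgroup.index_dvd_of_le le_sup_left)
          (Subgroup.index_dvd_of_le le_sup_right)
      rw [hco.gcd_eq_one] at hd
      exact Nat.dvd_one.mp hd
    have hg : g ∈ ((S : Set G) * (H : Set G)) := by
      rw [← Subgroup.normal_mul, hsup]
      trivial
    obtain ⟨s, hs, h, hh, rfl⟩ := hg
    refine ⟨s, hs, ?_⟩
    rw [conj_map_mul]
    congr 1
    rw [hMeq, Subgroup.map_inf _ _ _ (MulAut.conj h).injective, conj_map_self hh,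
      conj_map_normal hS]
  · intro hinv
    haveI := hS
    set N := Subgroup.normalizer (M : Set G) with hNdef
    have hMN : M ≤ N := Subgroup.le_normalizer
    -- G = S ⊔ N (Frattini-type argument)
    have hsupSN : S ⊔ N = ⊤ := by
      rw [eq_top_iff]
      intro g _
      obtain ⟨s, hs, hconj⟩ := hinv g
      have hmem : s⁻¹ * g ∈ N := by
        apply mem_normalizer_of_conj_map
        rw [conj_map_mul, hconj, ← conj_map_mul, inv_mul_cancel, conj_map_one]
      have hgeq : g = s * (s⁻¹ * g) := by group
      rw [hgeq]
      exact mul_mem ((le_sup_left : S ≤ S ⊔ N) hs) ((le_sup_right : N ≤ S ⊔ N) hmem)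
    -- numbers
    set a := Nat.card M with ha_def
    set b := M.relIndex S with hb_def
    set c := S.index with hc_def
    have hb : ∀ p ∈ π, ¬ p ∣ b := hM.2
    have ha : ∀ p : ℕ, p.Prime → p ∣ a → p ∈ π := by
      intro p pp hpa
      apply hM.1 p pp
      rwa [Nat.card_congr (Subgroup.subgroupOfEquivOfLe hMS).toEquiv]
    -- quotient setup
    set M' : Subgroup N := M.subgroupOf N with hM'def
    haveI hM'norm : M'.Normal := Subgroup.normal_in_normalizer
    have hφ : Function.Surjective (QuotientGroup.mk' M') := QuotientGroup.mk'_surjective M'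
    set T' : Subgroup N := S.subgroupOf N with hT'def
    have hM'T' : M' ≤ T' := fun x hx => hMS hx
    haveI hT'norm : T'.Normal := hS.comap N.subtype
    set Tb : Subgroup (N ⧸ M') := T'.map (QuotientGroup.mk' M') with hTbdef
    haveI hTbnorm : Tb.Normal := hT'norm.map _ hφ
    set t := M.relIndex (S ⊓ N) with ht_def
    set r := S.relIndex N with hr_def
    have hMSN : M ≤ S ⊓ N := le_inf hMS hMN
    -- index and card computations
    have hTbindex : Tb.index = r := by
      rw [hTbdef, Subgroup.index_map, QuotientGroup.ker_mk', sup_of_le_left hM'T',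
        MonoidHom.range_eq_top_of_surjective _ hφ, Subgroup.index_top, mul_one]
      rfl
    have hcardQ : Nat.card (N ⧸ M') = t * r := by
      have h1 : M'.index = M.relIndex N := rfl
      have h2 : M.relIndex (S ⊓ N) * (S ⊓ N).relIndex N = M.relIndex N :=
        Subgroup.relIndex_mul_relIndex M (S ⊓ N) N hMSN inf_le_right
      rw [Subgroup.inf_relIndex_right] at h2
      show M'.index = t * r
      rw [h1, ← h2]
    have ht_dvd_b : t ∣ b :=
      Dvd.intro _ (Subgroup.relIndex_mul_relIndex M (S ⊓ N) S hMSN inf_le_left)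
    have hr_dvd_c : r ∣ c := Subgroup.relIndex_dvd_index_of_normal S N
    have hr_pos : 0 < r := Nat.pos_of_ne_zero Subgroup.index_ne_zero_of_finite
    have ht_pos : 0 < t := Nat.pos_of_ne_zero Subgroup.index_ne_zero_of_finite
    have ha_pos : 0 < a := Nat.card_pos
    have hc_pos : 0 < c := Nat.pos_of_ne_zero Subgroup.index_ne_zero_of_finite
    have hcardTb : Nat.card Tb = t := by
      have h1 : Nat.card Tb * Tb.index = Nat.card (N ⧸ M') := Subgroup.card_mul_index Tb
      rw [hTbindex, hcardQ] at h1
      exact Nat.eq_of_mul_eq_mul_right hr_pos h1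
    -- Schur-Zassenhaus
    have hco : Nat.Coprime (Nat.card Tb) Tb.index := by
      rw [hcardTb, hTbindex]
      exact (pi_coprime (fun p pp hpr => hquot p pp (hpr.trans hr_dvd_c))
        (fun p hp hpd => hb p hp (hpd.trans ht_dvd_b))).symm
    obtain ⟨Kb, hKb⟩ := Subgroup.exists_right_complement'_of_coprime hco
    set K' : Subgroup N := Kb.comap (QuotientGroup.mk' M') with hK'def
    set H : Subgroup G := K'.map N.subtype with hHdef
    have hK'index : K'.index = t := by
      rw [hK'def, Subgroup.index_comap_of_surjective _ hφ, hKb.index_eq_card, hcardTb]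
    have hHindex : H.index = t * N.index := by
      rw [hHdef, Subgroup.index_map, Subgroup.ker_subtype, sup_bot_eq, Subgroup.range_subtype,
        hK'index]
    have hcardKb : Nat.card Kb = r := by
      have h1 := hKb.card_mul
      rw [hcardTb, hcardQ] at h1
      exact Nat.eq_of_mul_eq_mul_left ht_pos h1
    have hcardM' : Nat.card M' = a :=
      (Nat.card_congr (Subgroup.subgroupOfEquivOfLe hMN).toEquiv)
    have hcardN : Nat.card N = a * (t * r) := by
      have h1 : Nat.card M' * M'.index = Nat.card N := Subgroup.card_mul_index M'
      have h2 : M'.index = Nat.card (N ⧸ M') := rfl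
      rw [hcardM', h2, hcardQ] at h1
      exact h1.symm
    have hM'K' : M' ≤ K' := by
      intro x hx
      show QuotientGroup.mk' M' x ∈ Kb
      have : QuotientGroup.mk' M' x = 1 := by
        rw [QuotientGroup.mk'_apply, QuotientGroup.eq_one_iff]
        exact hx
      rw [this]
      exact one_mem Kb
    have hcardK' : Nat.card K' = a * r := by
      have h1 : Nat.card K' * K'.index = Nat.card N := Subgroup.card_mul_index K'
      rw [hK'index, hcardN] at h1
      have h2 : (a * r) * t = a * (t * r) := by ring
      rw [← h2] at h1
      exact Nat.eq_of_mul_eq_mul_right ht_pos h1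
    have hcardH : Nat.card H = a * r := by
      rw [← hcardK']
      exact (Nat.card_congr (Subgroup.equivMapOfInjective K' N.subtype
        N.subtype_injective).toEquiv).symm
    -- r = c via second isomorphism theorem and S ⊔ N = ⊤
    have hrc : r = c := by
      have e := QuotientGroup.quotientInfEquivProdNormalQuotient N S
      have hcard := Nat.card_congr e.toEquiv
      have h1 : Nat.card (N ⧸ S.subgroupOf N) = r := rfl
      have h2 : N ⊔ S = ⊤ := by rw [sup_comm]; exact hsupSN
      rw [h1, h2] at hcard
      have h3 : Nat.card ((⊤ : Subgroup G) ⧸ S.subgroupOf ⊤) = S.relIndex ⊤ := rfl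
      rw [h3, Subgroup.relIndex_top_right] at hcard
      exact hcard
    have hNindex_dvd_b : N.index ∣ b := by
      have h1 : Nat.card N * N.index = Nat.card G := Subgroup.card_mul_index N
      have h2 : Nat.card (M.subgroupOf S) * (M.subgroupOf S).index = Nat.card S :=
        Subgroup.card_mul_index _
      have h3 : Nat.card (M.subgroupOf S) = a :=
        Nat.card_congr (Subgroup.subgroupOfEquivOfLe hMS).toEquiv
      have h4 : Nat.card S * S.index = Nat.card G := Subgroup.card_mul_index S
      rw [h3] at h2
      have h5 : (M.subgroupOf S).index = b := rfl
      rw [h5] at h2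
      rw [← h2] at h4
      rw [hcardN, hrc, ← h4] at h1
      -- h1 : a * (t * c) * N.index = a * b * c
      have h6 : a * (t * c) * N.index = a * c * (t * N.index) := by ring
      have h7 : a * b * c = a * c * b := by ring
      rw [h6, h7] at h1
      have h8 : t * N.index = b :=
        Nat.eq_of_mul_eq_mul_left (Nat.mul_pos ha_pos hc_pos) h1
      exact Dvd.intro_left t h8
    refine ⟨H, ⟨?_, ?_⟩, ?_⟩
    · intro p pp hdvd
      rw [hcardH] at hdvd
      rcases (Nat.Prime.dvd_mul pp).mp hdvd with h | h
      · exact ha p pp h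
      · exact hquot p pp (h.trans (hrc ▸ dvd_refl c))
    · intro p hp hdvd
      rw [hHindex] at hdvd
      rcases (Nat.Prime.dvd_mul (hπ p hp)).mp hdvd with h | h
      · exact hb p hp (h.trans ht_dvd_b)
      · exact hb p hp (h.trans hNindex_dvd_b)
    · apply le_antisymm
      · refine le_inf ?_ hMS
        intro m hm
        exact ⟨⟨m, hMN hm⟩, hM'K' hm, rfl⟩
      · intro x hx
        obtain ⟨hxH, hxS⟩ := hx
        obtain ⟨n, hnK', hnx⟩ := hxH
        subst hnx
        have hnT' : n ∈ T' := hxS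
        have h1 : QuotientGroup.mk' M' n ∈ Tb := ⟨n, hnT', rfl⟩
        have h2 : QuotientGroup.mk' M' n ∈ Kb := hnK'
        have h3 : n ∈ M' := by
          have h4 : QuotientGroup.mk' M' n ∈ Tb ⊓ Kb := ⟨h1, h2⟩
          rw [hKb.disjoint.eq_bot] at h4
          rw [Subgroup.mem_bot] at h4
          rw [QuotientGroup.mk'_apply, QuotientGroup.eq_one_iff] at h4
          exact h4
        exact h3
end

section
/- Every Hall {2, 3, 5}-subgroup of the symmetric group Sym₇ is the stabilizer of a point; that is, every subgroup of Sym₇ of order 720 equals the stabilizer of some element of the underlying 7-element set. Consequently, any two Hall {2, 3, 5}-subgroups of Sym₇ are conjugate. -/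
open MulAction Equiv

lemma orbit_card_aux (H : Subgroup (Equiv.Perm (Fin 7))) (hH : Nat.card H = 720) (x : Fin 7) :
    (MulAction.orbit H x).ncard = 1 ∨ (MulAction.orbit H x).ncard = 6 := by
  classical
  set O := MulAction.orbit H x with hO
  have hmem : ∀ (h : H) (a : Fin 7), a ∈ O → h.1 a ∈ O := by
    rintro h a ⟨g, rfl⟩
    exact ⟨h * g, (mul_smul h g x)⟩
  have hinv : ∀ h : H, ∀ a : Fin 7, a ∈ O ↔ h.1 a ∈ O := by
    intro h a
    refine ⟨hmem h a, fun ha => ?_⟩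
    have := hmem h⁻¹ _ ha
    simpa using this
  have hinvc : ∀ h : H, ∀ a : Fin 7, a ∈ Oᶜ ↔ h.1 a ∈ Oᶜ := by
    intro h a
    simp [Set.mem_compl_iff, hinv h a]
  let f : H → Perm ↥O × Perm ↥(Oᶜ) := fun h =>
    (h.1.subtypePerm (fun a => (hinv h a).symm), h.1.subtypePerm (fun a => (hinvc h a).symm))
  have hf : Function.Injective f := by
    intro h₁ h₂ he
    apply Subtype.ext; apply Equiv.ext; intro a
    by_cases ha : a ∈ O
    · simpa [f] using congrArg (fun p => ((p.1 ⟨a, ha⟩ : ↥O) : Fin 7)) he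
    · simpa [f] using congrArg (fun p => ((p.2 ⟨a, ha⟩ : ↥(Oᶜ)) : Fin 7)) he
  have hcard : 720 ≤ Nat.factorial O.ncard * Nat.factorial (7 - O.ncard) := by
    have h1 : Nat.card H ≤ Nat.card (Perm ↥O × Perm ↥(Oᶜ)) :=
      Nat.card_le_card_of_injective f hf
    have hcompl : (Oᶜ).ncard = 7 - O.ncard := by
      have h2 := Set.ncard_add_ncard_compl O (Set.toFinite O) (Set.toFinite _)
      have h3 : Nat.card (Fin 7) = 7 := by
        rw [Nat.card_eq_fintype_card, Fintype.card_fin]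
      omega
    rw [hH, Nat.card_prod, Nat.card_eq_fintype_card, Nat.card_eq_fintype_card,
      Fintype.card_perm, Fintype.card_perm, ← Nat.card_eq_fintype_card,
      ← Nat.card_eq_fintype_card, Nat.card_coe_set_eq, Nat.card_coe_set_eq,
      hcompl] at h1
    exact h1
  have hdvd : O.ncard ∣ 720 := by
    have h1 := Subgroup.card_mul_index (MulAction.stabilizer H x)
    rw [MulAction.index_stabilizer, hH] at h1
    exact Dvd.intro_left _ h1
  have hle7 : O.ncard ≤ 7 := by
    have := Set.ncard_le_ncard (Set.subset_univ O) (Set.toFinite _)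
    simpa [Set.ncard_univ] using this
  have hpos : 0 < O.ncard := by
    have : x ∈ O := MulAction.mem_orbit_self x
    exact (Set.ncard_pos (Set.toFinite O)).mpr ⟨x, this⟩
  set k := O.ncard with hk
  clear_value k
  interval_cases k <;> revert hdvd hcard <;> decide

theorem sym7_hall_235_is_stabilizer :
    (∀ H : Subgroup (Equiv.Perm (Fin 7)), Nat.card H = 720 →
      ∃ x : Fin 7, H = MulAction.stabilizer (Equiv.Perm (Fin 7)) x) ∧
    (∀ H K : Subgroup (Equiv.Perm (Fin 7)),
      IsHallSubgroup {2, 3, 5} H → IsHallSubgroup {2, 3, 5} K →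
      ∃ g : Equiv.Perm (Fin 7), H.map (MulAut.conj g).toMonoidHom = K) := by
  classical
  have hG : Nat.card (Equiv.Perm (Fin 7)) = 5040 := by
    rw [Nat.card_eq_fintype_card, Fintype.card_perm, Fintype.card_fin]
    decide
  have main : ∀ H : Subgroup (Equiv.Perm (Fin 7)), Nat.card H = 720 →
      ∃ x : Fin 7, H = MulAction.stabilizer (Equiv.Perm (Fin 7)) x := by
    intro H hH
    have hfix : ∃ x : Fin 7, (orbit H x).ncard = 1 := by
      by_contra hc
      push_neg at hc
      have h6 : ∀ x : Fin 7, (orbit H x).ncard = 6 :=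
        fun x => (orbit_card_aux H hH x).resolve_left (hc x)
      obtain ⟨y, hy⟩ : ∃ y : Fin 7, y ∉ orbit H (0 : Fin 7) := by
        by_contra hy
        push_neg at hy
        have huniv : orbit H (0 : Fin 7) = Set.univ := Set.eq_univ_of_forall hy
        have := h6 0
        rw [huniv] at this
        simp [Set.ncard_univ] at this
      have hdisj : Disjoint (orbit H (0 : Fin 7)) (orbit H y) := by
        rw [Set.disjoint_left]
        intro a ha hay
        have e1 := (MulAction.orbit_eq_iff (G := H)).mpr ha
        have e2 := (MulAction.orbit_eq_iff (G := H)).mpr hay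
        apply hy
        rw [← e1, e2]
        exact MulAction.mem_orbit_self y
      have hunion := Set.ncard_union_eq hdisj (Set.toFinite _) (Set.toFinite _)
      rw [h6 0, h6 y] at hunion
      have hle : (orbit H (0 : Fin 7) ∪ orbit H y).ncard ≤ 7 := by
        have h7 := Set.ncard_le_ncard (Set.subset_univ (orbit H (0 : Fin 7) ∪ orbit H y))
          (Set.toFinite (Set.univ : Set (Fin 7)))
        rw [Set.ncard_univ, Nat.card_eq_fintype_card, Fintype.card_fin] at h7
        exact h7
      omega
    obtain ⟨x, hx⟩ := hfix
    have hsub : H ≤ MulAction.stabilizer (Equiv.Perm (Fin 7)) x := by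
      intro g hg
      obtain ⟨a, ha⟩ := Set.ncard_eq_one.mp hx
      have hxa : x ∈ ({a} : Set (Fin 7)) := ha ▸ MulAction.mem_orbit_self x
      have hgx : g • x ∈ ({a} : Set (Fin 7)) := by
        rw [← ha]
        exact MulAction.mem_orbit x (⟨g, hg⟩ : H)
      rw [MulAction.mem_stabilizer_iff]
      simp only [Set.mem_singleton_iff] at hxa hgx
      rw [hgx, hxa]
    have hstab : Nat.card (MulAction.stabilizer (Equiv.Perm (Fin 7)) x) = 720 := by
      have h1 := Subgroup.card_mul_index (MulAction.stabilizer (Equiv.Perm (Fin 7)) x)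
      rw [MulAction.index_stabilizer] at h1
      have h2 : orbit (Equiv.Perm (Fin 7)) x = Set.univ := by
        apply Set.eq_univ_of_forall
        intro y
        exact ⟨Equiv.swap x y, by simp [Equiv.Perm.smul_def]⟩
      rw [h2, hG] at h1
      simp only [Set.ncard_univ, Nat.card_eq_fintype_card, Fintype.card_fin] at h1 ⊢
      omega
    exact ⟨x, Subgroup.eq_of_le_of_card_ge hsub (by rw [hH, hstab])⟩
  refine ⟨main, fun H K hHall hKall => ?_⟩
  have hcard : ∀ L : Subgroup (Equiv.Perm (Fin 7)), IsHallSubgroup {2, 3, 5} L →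
      Nat.card L = 720 := by
    intro L hL
    have h1 := Subgroup.card_mul_index L
    rw [hG] at h1
    set n := Nat.card L with hn
    set m := L.index with hm
    have h2 : ¬ (2 : ℕ) ∣ m := hL.2 2 (by simp)
    have h3 : ¬ (3 : ℕ) ∣ m := hL.2 3 (by simp)
    have h5 : ¬ (5 : ℕ) ∣ m := hL.2 5 (by simp)
    have c2 : Nat.Coprime 16 m := by
      have : Nat.Coprime 2 m := (Nat.Prime.coprime_iff_not_dvd (by norm_num)).mpr h2
      exact Nat.Coprime.pow_left 4 this
    have c3 : Nat.Coprime 9 m := by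
      have : Nat.Coprime 3 m := (Nat.Prime.coprime_iff_not_dvd (by norm_num)).mpr h3
      exact Nat.Coprime.pow_left 2 this
    have c5 : Nat.Coprime 5 m := (Nat.Prime.coprime_iff_not_dvd (by norm_num)).mpr h5
    have d16 : 16 ∣ n := c2.dvd_of_dvd_mul_right (by rw [h1]; norm_num)
    have d9 : 9 ∣ n := c3.dvd_of_dvd_mul_right (by rw [h1]; norm_num)
    have d5 : 5 ∣ n := c5.dvd_of_dvd_mul_right (by rw [h1]; norm_num)
    have d144 : 144 ∣ n := Nat.Coprime.mul_dvd_of_dvd_of_dvd (by norm_num) d16 d9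
    have d720 : 720 ∣ n := Nat.Coprime.mul_dvd_of_dvd_of_dvd (by norm_num) d144 d5
    obtain ⟨k, hk⟩ := d720
    have hkd : k ∣ 7 := by
      have : 720 * k ∣ 720 * 7 := by
        rw [← hk]
        exact ⟨m, by omega⟩
      exact (Nat.mul_dvd_mul_iff_left (by norm_num : 0 < 720)).mp this
    rcases (by norm_num : Nat.Prime 7).eq_one_or_self_of_dvd k hkd with h | h
    · rw [hk, h]
    · exfalso
      have h7 : (7 : ℕ) ∣ n := by rw [hk, h]; norm_num
      have := hL.1 7 (by norm_num) h7
      simp at this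
  obtain ⟨x, hx⟩ := main H (hcard H hHall)
  obtain ⟨y, hy⟩ := main K (hcard K hKall)
  refine ⟨Equiv.swap x y, ?_⟩
  rw [hx, hy, ← MulAction.stabilizer_smul_eq_stabilizer_map_conj]
  congr 1
  simp [Equiv.Perm.smul_def]
end

section
/- No Hall {2, 3}-subgroup of the symmetric group Sym₇ is contained in a Hall {2, 3, 5}-subgroup of Sym₇; that is, no subgroup of Sym₇ of order 144 is contained in a subgroup of order 720. In particular, a Hall {2, 3}-subgroup of Sym₇ cannot be obtained as the intersection of a Hall {2, 3}-subgroup with a Hall {2, 3, 5}-subgroup equal to it inside the latter. -/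
open Equiv Equiv.Perm Subgroup

section Aux

variable {α : Type*} [Fintype α] [DecidableEq α]

private lemma exists_notMem_of_card_lt (s : Finset α) (h : s.card < Fintype.card α) :
    ∃ x, x ∉ s := by
  by_contra hc
  push_neg at hc
  have hsub : (Finset.univ : Finset α) ⊆ s := fun x _ => hc x
  have := Finset.card_le_card hsub
  rw [Finset.card_univ] at this
  omega

/-- A nontrivial normal subgroup of `Perm α` contains a three-cycle. -/
private lemma exists_threeCycle_of_normal (h5 : 5 ≤ Fintype.card α)
    (N : Subgroup (Perm α)) (hN : N.Normal) (hbot : N ≠ ⊥) :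
    ∃ f ∈ N, IsThreeCycle f := by
  obtain ⟨σ, hσN, hσ1⟩ : ∃ σ ∈ N, σ ≠ 1 := by
    by_contra hc
    push_neg at hc
    exact hbot (Subgroup.eq_bot_iff_forall N |>.mpr hc)
  obtain ⟨a, ha⟩ : ∃ a, σ a ≠ a := by
    by_contra hc
    push_neg at hc
    exact hσ1 (Equiv.ext hc)
  have key : ∀ ρ : Perm α, ρ ∈ N → ∀ x y : α, swap (ρ x) (ρ y) * swap x y ∈ N := by
    intro ρ hρ x y
    have h1 : ρ * (swap x y * ρ⁻¹ * (swap x y)⁻¹) ∈ N :=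
      N.mul_mem hρ (hN.conj_mem ρ⁻¹ (N.inv_mem hρ) (swap x y))
    have h2 : swap (ρ x) (ρ y) * swap x y = ρ * (swap x y * ρ⁻¹ * (swap x y)⁻¹) := by
      rw [swap_apply_apply, Equiv.swap_inv]
      group
    rwa [h2]
  obtain ⟨c, hc⟩ := exists_notMem_of_card_lt {a, σ a} (by
    have : ({a, σ a} : Finset α).card ≤ 2 := (Finset.card_insert_le _ _).trans (by simp)
    omega)
  simp only [Finset.mem_insert, Finset.mem_singleton, not_or] at hc
  obtain ⟨hca, hcb⟩ := hc
  have hπN : swap (σ a) (σ c) * swap a c ∈ N := key σ hσN a c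
  by_cases hdc : σ c = c
  · refine ⟨_, hπN, ?_⟩
    rw [hdc, swap_comm (σ a) c, swap_comm a c]
    exact isThreeCycle_swap_mul_swap_same hcb hca ha
  · by_cases hda : σ c = a
    · refine ⟨_, hπN, ?_⟩
      rw [hda, swap_comm (σ a) a]
      exact isThreeCycle_swap_mul_swap_same (Ne.symm ha) (Ne.symm hca) (fun h => hcb h.symm)
    · -- σ c is distinct from a, c, σ a
      have hdsb : σ c ≠ σ a := fun h => hca (σ.injective h)
      obtain ⟨e, he⟩ := exists_notMem_of_card_lt {a, σ a, c, σ c} (by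
        have : ({a, σ a, c, σ c} : Finset α).card ≤ 4 := by
          apply (Finset.card_insert_le _ _).trans
          apply Nat.succ_le_succ
          apply (Finset.card_insert_le _ _).trans
          apply Nat.succ_le_succ
          apply (Finset.card_insert_le _ _).trans
          simp
        omega)
      simp only [Finset.mem_insert, Finset.mem_singleton, not_or] at he
      obtain ⟨hea, heb, hec, hed⟩ := he
      set π := swap (σ a) (σ c) * swap a c with hπdef
      have hπa : π a = c := by
        rw [hπdef]
        simp only [Equiv.Perm.mul_apply, swap_apply_left]
        exact swap_apply_of_ne_of_ne hcb (Ne.symm hdc)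
      have hπe : π e = e := by
        rw [hπdef]
        simp only [Equiv.Perm.mul_apply]
        rw [swap_apply_of_ne_of_ne hea hec, swap_apply_of_ne_of_ne heb hed]
      have hπ'N : swap (π a) (π e) * swap a e ∈ N := key π hπN a e
      rw [hπa, hπe] at hπ'N
      refine ⟨_, hπ'N, ?_⟩
      rw [swap_comm c e, swap_comm a e]
      exact isThreeCycle_swap_mul_swap_same hec hea hca

/-- A nontrivial normal subgroup of `Perm α` (with `card α ≥ 5`)
contains the alternating group. -/
private lemma alternating_le_of_normal (h5 : 5 ≤ Fintype.card α)
    (N : Subgroup (Perm α)) (hN : N.Normal) (hbot : N ≠ ⊥) :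
    alternatingGroup α ≤ N := by
  obtain ⟨f, hfN, hf⟩ := exists_threeCycle_of_normal h5 N hN hbot
  haveI := hN.subgroupOf (alternatingGroup α)
  have h1 : Subgroup.normalClosure ({⟨f, hf.mem_alternatingGroup⟩} : Set (alternatingGroup α)) = ⊤ :=
    hf.alternating_normalClosure (by rwa [Nat.card_eq_fintype_card])
  have h2 : Subgroup.normalClosure ({⟨f, hf.mem_alternatingGroup⟩} : Set (alternatingGroup α)) ≤
      N.subgroupOf (alternatingGroup α) := by
    apply Subgroup.normalClosure_le_normal
    intro x hx
    rw [Set.mem_singleton_iff] at hx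
    subst hx
    exact Subgroup.mem_subgroupOf.mpr hfN
  rw [h1] at h2
  exact Subgroup.subgroupOf_eq_top.mp (top_le_iff.mp h2)

/-- `Perm β` with `|β| = 6` has no subgroup of order `144`. -/
private lemma no_subgroup_144 {β : Type*} [Fintype β] [DecidableEq β]
    (h6 : Fintype.card β = 6) (H : Subgroup (Perm β)) (hH : Nat.card H = 144) : False := by
  have hcard : Nat.card (Perm β) = 720 := by
    rw [Nat.card_eq_fintype_card, Fintype.card_perm, h6]
    decide
  have hidx : H.index = 5 := by
    have h := H.card_mul_index
    rw [hH, hcard] at h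
    omega
  set N := H.normalCore with hNdef
  have hNle : N ≤ H := H.normalCore_le
  have hNidx : N.index ≤ 120 := by
    have hker : N = (MulAction.toPermHom (Perm β) (Perm β ⧸ H)).ker :=
      Subgroup.normalCore_eq_ker H
    rw [hker, Subgroup.index_ker]
    haveI : DecidableEq (Perm β ⧸ H) := Classical.decEq _
    haveI : Fintype (Perm β ⧸ H) := Fintype.ofFinite _
    have hq : Fintype.card (Perm β ⧸ H) = 5 := by
      rw [← Nat.card_eq_fintype_card, ← Subgroup.index_eq_card]; exact hidx
    calc Nat.card (MulAction.toPermHom (Perm β) (Perm β ⧸ H)).range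
        ≤ Nat.card (Perm (Perm β ⧸ H)) := Subgroup.card_le_card_group _
      _ = 120 := by
          rw [Nat.card_eq_fintype_card, Fintype.card_perm, hq]
          decide
  have hNcard : 6 ≤ Nat.card N := by
    have h := N.card_mul_index
    rw [hcard] at h
    by_contra hlt
    push_neg at hlt
    have : Nat.card N * N.index ≤ 5 * 120 :=
      Nat.mul_le_mul (by omega) hNidx
    omega
  have hNbot : N ≠ ⊥ := by
    intro hb
    rw [hb] at hNcard
    simp [Nat.card_eq_fintype_card] at hNcard
  have hA : alternatingGroup β ≤ N :=
    alternating_le_of_normal (by omega) N (Subgroup.normalCore_normal H) hNbot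
  haveI : Nontrivial β := Fintype.one_lt_card_iff_nontrivial.mp (by omega)
  have hAcard : Nat.card (alternatingGroup β) = 360 := by
    have h := two_mul_card_alternatingGroup (α := β)
    rw [Fintype.card_perm, h6] at h
    have h720 : Nat.factorial 6 = 720 := by decide
    rw [h720] at h
    rw [Nat.card_eq_fintype_card]
    omega
  have : Nat.card (alternatingGroup β) ≤ Nat.card H :=
    Subgroup.card_le_of_le (hA.trans hNle)
  omega

end Aux

private lemma card_sym7 : Nat.card (Equiv.Perm (Fin 7)) = 5040 := by
  rw [Nat.card_eq_fintype_card, Fintype.card_perm, Fintype.card_fin]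
  decide

/-- The main combinatorial fact: no subgroup of order 144 of `Sym 7` is contained
in one of order 720. -/
private lemma main_part2 (H K : Subgroup (Equiv.Perm (Fin 7)))
    (hH : Nat.card H = 144) (hK : Nat.card K = 720) : ¬ H ≤ K := by
  intro hle
  have hG := card_sym7
  have hKidx : K.index = 7 := by
    have h := K.card_mul_index
    rw [hK, hG] at h
    omega
  have h5 : (5 : ℕ) ≤ Fintype.card (Fin 7) := by simp
  -- normal core of K is trivial
  have hcore : K.normalCore = ⊥ := by
    by_contra hbot
    have hA := alternating_le_of_normal h5 K.normalCore (Subgroup.normalCore_normal K) hbot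
    have h1 : Nat.card (alternatingGroup (Fin 7)) ≤ Nat.card K :=
      Subgroup.card_le_of_le (hA.trans K.normalCore_le)
    have h2 : Nat.card (alternatingGroup (Fin 7)) = 2520 := by
      have h := two_mul_card_alternatingGroup (α := Fin 7)
      rw [Fintype.card_perm, Fintype.card_fin] at h
      have h5040 : Nat.factorial 7 = 5040 := by decide
      rw [h5040] at h
      rw [Nat.card_eq_fintype_card]
      omega
    omega
  set G := Equiv.Perm (Fin 7)
  set X := G ⧸ K with hXdef
  set φ := MulAction.toPermHom G X with hφdef
  have hker : φ.ker = ⊥ := by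
    rw [← Subgroup.normalCore_eq_ker]; exact hcore
  have hinj : Function.Injective φ := (MonoidHom.ker_eq_bot_iff φ).mp hker
  haveI : Fintype X := Fintype.ofFinite _
  haveI : DecidableEq X := Classical.decEq _
  have hX : Fintype.card X = 7 := by
    rw [← Nat.card_eq_fintype_card, ← Subgroup.index_eq_card]; exact hKidx
  set x₀ : X := ((1 : G) : X) with hx₀
  have hfix : ∀ h : G, h ∈ H → φ h x₀ = x₀ := by
    intro h hh
    have : φ h x₀ = ((h : G) : X) := by
      rw [hx₀]
      show h • ((1 : G) : X) = ((h : G) : X)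
      rw [MulAction.Quotient.smul_coe]
      simp [smul_eq_mul]
    rw [this, hx₀]
    rw [QuotientGroup.eq]
    simpa only [mul_one] using K.inv_mem (hle hh)
  -- restrict to permutations of X \ {x₀}
  have hiff : ∀ (h : H) (x : X), x ≠ x₀ ↔ φ (h : G) x ≠ x₀ := by
    intro h x
    have hfx : φ (h : G) x₀ = x₀ := hfix h h.2
    constructor
    · intro hx hc
      exact hx ((φ (h : G)).injective (hc.trans hfx.symm))
    · intro hx hc
      exact hx (by rw [hc, hfx])
  let f : H →* Perm {x : X // x ≠ x₀} := {
    toFun := fun h => (φ (h : G)).subtypePerm (fun x => (hiff h x).symm)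
    map_one' := by
      ext x
      simp [Equiv.Perm.subtypePerm_apply]
    map_mul' := by
      intro h₁ h₂
      ext x
      simp [Equiv.Perm.subtypePerm_apply, Equiv.Perm.mul_apply]
      rfl }
  have hfinj : Function.Injective f := by
    intro h₁ h₂ heq
    have hall : ∀ x : X, φ (h₁ : G) x = φ (h₂ : G) x := by
      intro x
      by_cases hx : x = x₀
      · rw [hx, hfix _ h₁.2, hfix _ h₂.2]
      · have := congrArg (fun (σ : Perm {x : X // x ≠ x₀}) => (σ ⟨x, hx⟩ : {x : X // x ≠ x₀})) heq
        simpa [f, Equiv.Perm.subtypePerm_apply, Subtype.ext_iff] using this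
    have : φ (h₁ : G) = φ (h₂ : G) := Equiv.ext hall
    exact Subtype.ext (hinj this)
  have hcardβ : Fintype.card {x : X // x ≠ x₀} = 6 := by
    have h1 : Fintype.card {x : X // ¬ x = x₀} = Fintype.card X - Fintype.card {x : X // x = x₀} :=
      Fintype.card_subtype_compl _
    rw [Fintype.card_subtype_eq] at h1
    rw [hX] at h1
    exact h1
  apply no_subgroup_144 hcardβ f.range
  rw [← Nat.card_congr (MonoidHom.ofInjective hfinj).toEquiv]
  exact hH

private lemma pow_dvd_of_not_dvd {p n c i : ℕ} (hp : p.Prime) (h : c * i = 5040)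
    (hpn : p ^ n ∣ 5040) (hi : ¬ p ∣ i) : p ^ n ∣ c := by
  have hco : Nat.Coprime (p ^ n) i :=
    Nat.Coprime.pow_left n ((Nat.Prime.coprime_iff_not_dvd hp).mpr hi)
  exact hco.dvd_of_dvd_mul_right (h ▸ hpn)

private lemma card_eq_144 {c i : ℕ} (h : c * i = 5040) (h5 : ¬ 5 ∣ c) (h7 : ¬ 7 ∣ c)
    (h2 : ¬ 2 ∣ i) (h3 : ¬ 3 ∣ i) : c = 144 := by
  have h16 : 2 ^ 4 ∣ c := pow_dvd_of_not_dvd Nat.prime_two h (by norm_num) h2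
  have h9 : 3 ^ 2 ∣ c := pow_dvd_of_not_dvd Nat.prime_three h (by norm_num) h3
  have h144 : 144 ∣ c := by
    have := Nat.Coprime.mul_dvd_of_dvd_of_dvd (by norm_num : Nat.Coprime (2 ^ 4) (3 ^ 2)) h16 h9
    norm_num at this ⊢
    convert this using 1
  obtain ⟨k, rfl⟩ := h144
  have hki : k * i = 35 := by
    have : 144 * (k * i) = 144 * 35 := by rw [← mul_assoc]; omega
    omega
  have hk35 : k ∣ 35 := ⟨i, hki.symm⟩
  have hk1 : 1 ≤ k := Nat.pos_of_ne_zero (fun h0 => by simp [h0] at hki)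
  have hkle : k ≤ 35 := Nat.le_of_dvd (by norm_num) hk35
  interval_cases k <;> omega

private lemma card_eq_720 {c i : ℕ} (h : c * i = 5040) (h7 : ¬ 7 ∣ c)
    (h2 : ¬ 2 ∣ i) (h3 : ¬ 3 ∣ i) (h5 : ¬ 5 ∣ i) : c = 720 := by
  have h16 : 2 ^ 4 ∣ c := pow_dvd_of_not_dvd Nat.prime_two h (by norm_num) h2
  have h9 : 3 ^ 2 ∣ c := pow_dvd_of_not_dvd Nat.prime_three h (by norm_num) h3
  have h5' : 5 ^ 1 ∣ c := pow_dvd_of_not_dvd Nat.prime_five h (by norm_num) h5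
  have h144 : 144 ∣ c := by
    have := Nat.Coprime.mul_dvd_of_dvd_of_dvd (by norm_num : Nat.Coprime (2 ^ 4) (3 ^ 2)) h16 h9
    norm_num at this ⊢
    convert this using 1
  have h720 : 720 ∣ c := by
    have := Nat.Coprime.mul_dvd_of_dvd_of_dvd (by norm_num : Nat.Coprime 144 (5 ^ 1)) h144 h5'
    norm_num at this ⊢
    convert this using 1
  obtain ⟨k, rfl⟩ := h720
  have hki : k * i = 7 := by
    have : 720 * (k * i) = 720 * 7 := by rw [← mul_assoc]; omega
    omega
  have hk7 : k ∣ 7 := ⟨i, hki.symm⟩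
  have hk1 : 1 ≤ k := Nat.pos_of_ne_zero (fun h0 => by simp [h0] at hki)
  have hkle : k ≤ 7 := Nat.le_of_dvd (by norm_num) hk7
  interval_cases k <;> omega

theorem sym7_hall_two_three_not_le_hall_235 :
    (∀ H K : Subgroup (Equiv.Perm (Fin 7)),
      IsHallSubgroup {2, 3} H → IsHallSubgroup {2, 3, 5} K → ¬ H ≤ K) ∧
    (∀ H K : Subgroup (Equiv.Perm (Fin 7)),
      Nat.card H = 144 → Nat.card K = 720 → ¬ H ≤ K) := by
  refine ⟨?_, main_part2⟩
  intro H K hHall hKall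
  obtain ⟨hH1, hH2⟩ := hHall
  obtain ⟨hK1, hK2⟩ := hKall
  have hHm := H.card_mul_index
  have hKm := K.card_mul_index
  rw [card_sym7] at hHm hKm
  have hH144 : Nat.card H = 144 := by
    apply card_eq_144 hHm
    · intro h5
      have := hH1 5 (by norm_num) h5
      simp at this
    · intro h7
      have := hH1 7 (by norm_num) h7
      simp at this
    · exact hH2 2 (by simp)
    · exact hH2 3 (by simp)
  have hK720 : Nat.card K = 720 := by
    apply card_eq_720 hKm
    · intro h7
      have := hK1 7 (by norm_num) h7
      simp at this
    · exact hK2 2 (by simp)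
    · exact hK2 3 (by simp)
    · exact hK2 5 (by simp)
  exact main_part2 H K hH144 hK720
end
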